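/- Let {X_t}_{t=1}^{T} be a sequence of symmetric real matrices of a fixed order, and set A_t := Σ_{s=1}^{t} X_s. Suppose there are sequences of symmetric matrices {Y_t}_{t=1}^{T}, {Z_t}_{t=0}^{T} and real numbers {ρ_t}_{t=0}^{T} satisfying Y_t = Z_{t−1} + X_t, ρ_t = ρ_{t−1} + ‖Y_t − Z_t‖₂, Z_0 = 0, and ρ_0 = 0. Define B_t := ρ_t·I + Z_t, where I is the identity matrix. Then for every t = 1,…,T: B_t ⪰ B_{t−1} + X_t (with B_0 = 0), and A_t ⪯ B_t ⪯ 2ρ_t·I + A_t. -/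

import Mathlib

open Matrix

/-- Spectral norm (largest singular value) of a real square matrix, as the operator norm of
the induced map on Euclidean space. -/
noncomputable def specNorm {n : Type*} [Fintype n] [DecidableEq n]
    (A : Matrix n n ℝ) : ℝ :=
  ‖Matrix.toEuclideanCLM (𝕜 := ℝ) A‖


lemma quad_le {n : Type*} [Fintype n] [DecidableEq n]
    (S : Matrix n n ℝ) (x : n → ℝ) :
    dotProduct x (S *ᵥ x) ≤ specNorm S * dotProduct x x := by
  set v : EuclideanSpace ℝ n := (WithLp.equiv 2 (n → ℝ)).symm x with hv
  have h1 : dotProduct x (S *ᵥ x) = inner ℝ v (Matrix.toEuclideanCLM (𝕜 := ℝ) S v) := by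
    rw [hv, WithLp.equiv_symm_apply, Matrix.toEuclideanCLM_toLp]
    simp [PiLp.inner_apply, dotProduct, RCLike.inner_apply, mul_comm]
  have h2 : dotProduct x x = ‖v‖ * ‖v‖ := by
    rw [← real_inner_self_eq_norm_mul_norm]
    simp only [hv, WithLp.equiv_symm_apply, PiLp.inner_apply, dotProduct, RCLike.inner_apply, conj_trivial]
  rw [h1, h2]
  calc inner ℝ v (Matrix.toEuclideanCLM (𝕜 := ℝ) S v)
      ≤ ‖v‖ * ‖Matrix.toEuclideanCLM (𝕜 := ℝ) S v‖ := real_inner_le_norm _ _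
    _ ≤ ‖v‖ * (‖Matrix.toEuclideanCLM (𝕜 := ℝ) S‖ * ‖v‖) :=
        mul_le_mul_of_nonneg_left (ContinuousLinearMap.le_opNorm _ _) (norm_nonneg _)
    _ = specNorm S * (‖v‖ * ‖v‖) := by unfold specNorm; ring

lemma herm_of_symm {n : Type*} [Fintype n] {S : Matrix n n ℝ} (hS : S.IsSymm) :
    S.IsHermitian := by
  rw [Matrix.IsHermitian, Matrix.conjTranspose_eq_transpose_of_trivial]; exact hS

lemma smul_one_sub_psd {n : Type*} [Fintype n] [DecidableEq n]
    {S : Matrix n n ℝ} (hS : S.IsSymm) :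
    (specNorm S • (1 : Matrix n n ℝ) - S).PosSemidef := by
  rw [posSemidef_iff_dotProduct_mulVec]
  constructor
  · apply herm_of_symm
    show _ = _
    rw [transpose_sub, transpose_smul, transpose_one, hS]
  · intro x
    have hx : star x = x := rfl
    have := quad_le S x
    have hdd : (0:ℝ) ≤ dotProduct x x :=
      Finset.sum_nonneg fun i _ => mul_self_nonneg _
    simp only [hx, sub_mulVec, smul_mulVec, one_mulVec, dotProduct_sub,
      dotProduct_smul, smul_eq_mul]
    linarith

lemma smul_one_add_psd {n : Type*} [Fintype n] [DecidableEq n]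
    {S : Matrix n n ℝ} (hS : S.IsSymm) :
    (specNorm S • (1 : Matrix n n ℝ) + S).PosSemidef := by
  have hneg : (-S).IsSymm := by show _ = _; rw [transpose_neg, hS]
  have h := smul_one_sub_psd hneg
  have he : specNorm (-S) = specNorm S := by
    unfold specNorm
    rw [show Matrix.toEuclideanCLM (𝕜 := ℝ) (-S) = -(Matrix.toEuclideanCLM (𝕜 := ℝ) S)
      from map_neg _ _, norm_neg]
  rw [he, sub_neg_eq_add] at h
  exact h

/-- accumulated-error sandwich. Given symmetric `X_t`, `Y_t = Z_{t−1} + X_t`,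
`ρ_t = ρ_{t−1} + ‖Y_t − Z_t‖₂`, `Z_0 = 0`, `ρ_0 = 0`, and `B_t = ρ_t·I + Z_t`,
`A_t = Σ_{s=1}^t X_s`, we have `B_t ⪰ B_{t−1} + X_t` and `A_t ⪯ B_t ⪯ 2ρ_t·I + A_t`
for `t = 1, …, T`. -/
theorem accumulated_error_sandwich
    {d : Type*} [Fintype d] [DecidableEq d] (T : ℕ)
    (X Y Z A B : ℕ → Matrix d d ℝ) (ρ : ℕ → ℝ)
    (hXsym : ∀ t, (X t).IsSymm) (hYsym : ∀ t, (Y t).IsSymm) (hZsym : ∀ t, (Z t).IsSymm)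
    (hA : ∀ t, A t = ∑ s ∈ Finset.Icc 1 t, X s)
    (hY : ∀ t, Y (t + 1) = Z t + X (t + 1))
    (hρ : ∀ t, ρ (t + 1) = ρ t + specNorm (Y (t + 1) - Z (t + 1)))
    (hZ0 : Z 0 = 0) (hρ0 : ρ 0 = 0)
    (hB : ∀ t, B t = ρ t • (1 : Matrix d d ℝ) + Z t) :
    ∀ t, 1 ≤ t → t ≤ T →
      (B t - (B (t - 1) + X t)).PosSemidef ∧
      (B t - A t).PosSemidef ∧
      ((2 * ρ t) • (1 : Matrix d d ℝ) + A t - B t).PosSemidef := by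
  have hSsym : ∀ n, (Y (n + 1) - Z (n + 1)).IsSymm := by
    intro n; show _ = _
    rw [transpose_sub, hYsym, hZsym]
  have key : ∀ n, B (n + 1) - (B n + X (n + 1)) =
      specNorm (Y (n + 1) - Z (n + 1)) • (1 : Matrix d d ℝ) - (Y (n + 1) - Z (n + 1)) := by
    intro n
    rw [hB, hB, hρ, hY, add_smul]
    abel
  have hAsucc : ∀ n, A (n + 1) = A n + X (n + 1) := by
    intro n
    rw [hA, hA, ← Finset.sum_Icc_succ_top (Nat.one_le_iff_ne_zero.mpr (Nat.succ_ne_zero n))]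
  have hP : ∀ t, (B t - A t).PosSemidef := by
    intro t
    induction t with
    | zero =>
        have : B 0 - A 0 = 0 := by
          rw [hB, hA, hZ0, hρ0]; simp
        rw [this]; exact Matrix.PosSemidef.zero
    | succ n ih =>
        have : B (n + 1) - A (n + 1) = (B (n + 1) - (B n + X (n + 1))) + (B n - A n) := by
          rw [hAsucc]; abel
        rw [this, key]
        exact (smul_one_sub_psd (hSsym n)).add ih
  have hQ : ∀ t, (ρ t • (1 : Matrix d d ℝ) + A t - Z t).PosSemidef := by
    intro t
    induction t with
    | zero =>
        have : ρ 0 • (1 : Matrix d d ℝ) + A 0 - Z 0 = 0 := by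
          rw [hA, hZ0, hρ0]; simp
        rw [this]; exact Matrix.PosSemidef.zero
    | succ n ih =>
        have hX : X (n + 1) = Y (n + 1) - Z n := by rw [hY]; abel
        have : ρ (n + 1) • (1 : Matrix d d ℝ) + A (n + 1) - Z (n + 1) =
            (specNorm (Y (n + 1) - Z (n + 1)) • (1 : Matrix d d ℝ) + (Y (n + 1) - Z (n + 1)))
            + (ρ n • (1 : Matrix d d ℝ) + A n - Z n) := by
          rw [hρ, hAsucc, hX, add_smul]; abel
        rw [this]
        exact (smul_one_add_psd (hSsym n)).add ih
  intro t ht1 _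
  obtain ⟨n, rfl⟩ : ∃ n, t = n + 1 := ⟨t - 1, (Nat.succ_pred_eq_of_pos ht1).symm⟩
  refine ⟨?_, hP (n + 1), ?_⟩
  · rw [Nat.add_sub_cancel, key]
    exact smul_one_sub_psd (hSsym n)
  · have : (2 * ρ (n + 1)) • (1 : Matrix d d ℝ) + A (n + 1) - B (n + 1) =
        ρ (n + 1) • (1 : Matrix d d ℝ) + A (n + 1) - Z (n + 1) := by
      rw [hB, two_mul, add_smul]; abel
    rw [this]
    exact hQ (n + 1)
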